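/- Let f be C³ on an interval J with f' ≠ 0 and f''' continuous, let α ∈ J with f(α) = 0, and suppose the Schwarzian derivative {f,x} < 0 on J. Then Φ = f/√|f'| is strictly monotonic on J and Φ(x)·Φ''(x) > 0 for all x ∈ J \ {α}. -/

import Mathlib

/-- The Schwarzian derivative `{f,x} = f'''/f' - (3/2)(f''/f')²`. -/
noncomputable def schwarzian (f : ℝ → ℝ) (x : ℝ) : ℝ :=
  deriv (deriv (deriv f)) x / deriv f x - (3/2) * (deriv (deriv f) x / deriv f x) ^ 2

/-- If `f` is `C³` on an open interval `J` with `f' ≠ 0`, `f(α) = 0` for some `α ∈ J`,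
and `{f,x} < 0` on `J`, then `Φ = f/√|f'|` is strictly monotonic on `J` and
`Φ(x)·Φ''(x) > 0` for all `x ∈ J \ {α}`. -/
theorem stmt6 (f : ℝ → ℝ) (J : Set ℝ) (hJ : IsOpen J) (hJc : Convex ℝ J)
    (hf : ∀ x ∈ J, ContDiffAt ℝ 3 f x)
    (hf' : ∀ x ∈ J, deriv f x ≠ 0)
    (α : ℝ) (hα : α ∈ J) (hfα : f α = 0)
    (hS : ∀ x ∈ J, schwarzian f x < 0)
    (Φ : ℝ → ℝ) (hΦ : ∀ x ∈ J, Φ x = f x / Real.sqrt |deriv f x|) :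
    (StrictMonoOn Φ J ∨ StrictAntiOn Φ J) ∧
      ∀ x ∈ J, x ≠ α → 0 < Φ x * deriv (deriv Φ) x := by
  have hord : Set.OrdConnected J := hJc.ordConnected
  have hfO : ContDiffOn ℝ 3 f J := fun x hx => (hf x hx).contDiffWithinAt
  have hg2 : ContDiffOn ℝ 2 (deriv f) J := hfO.deriv_of_isOpen hJ (by norm_num)
  have hg'1 : ContDiffOn ℝ 1 (deriv (deriv f)) J := hg2.deriv_of_isOpen hJ (by norm_num)
  have hfd : ∀ x ∈ J, DifferentiableAt ℝ f x := fun x hx =>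
    (hf x hx).differentiableAt (by norm_num)
  have hgd : ∀ x ∈ J, DifferentiableAt ℝ (deriv f) x := fun x hx =>
    ((hg2.contDiffAt (hJ.mem_nhds hx)).differentiableAt (by norm_num))
  have hg'd : ∀ x ∈ J, DifferentiableAt ℝ (deriv (deriv f)) x := fun x hx =>
    ((hg'1.contDiffAt (hJ.mem_nhds hx)).differentiableAt (by norm_num))
  -- constant sign of f'
  obtain ⟨ε, hε1, hεpos⟩ : ∃ ε : ℝ, (ε = 1 ∨ ε = -1) ∧ ∀ x ∈ J, 0 < ε * deriv f x := by
    by_cases h : ∀ x ∈ J, 0 < deriv f x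
    · exact ⟨1, Or.inl rfl, fun x hx => by simpa using h x hx⟩
    · push_neg at h
      obtain ⟨b, hb, hb0⟩ := h
      have hbneg : deriv f b < 0 := lt_of_le_of_ne hb0 (hf' b hb)
      refine ⟨-1, Or.inr rfl, fun x hx => ?_⟩
      have hxneg : deriv f x < 0 := by
        by_contra hxn
        push_neg at hxn
        have hxpos : 0 < deriv f x := lt_of_le_of_ne hxn (Ne.symm (hf' x hx))
        rcases le_total x b with hxb | hbx
        · have hsub : Set.Icc x b ⊆ J := hord.out hx hb
          have hc : ContinuousOn (deriv f) (Set.Icc x b) :=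
            (hg2.continuousOn).mono hsub
          have : (0:ℝ) ∈ Set.Icc (deriv f b) (deriv f x) := ⟨hbneg.le, hxpos.le⟩
          obtain ⟨c, hc1, hc2⟩ := intermediate_value_Icc' hxb hc this
          exact hf' c (hsub hc1) hc2
        · have hsub : Set.Icc b x ⊆ J := hord.out hb hx
          have hc : ContinuousOn (deriv f) (Set.Icc b x) :=
            (hg2.continuousOn).mono hsub
          have : (0:ℝ) ∈ Set.Icc (deriv f b) (deriv f x) := ⟨hbneg.le, hxpos.le⟩
          obtain ⟨c, hc1, hc2⟩ := intermediate_value_Icc hbx hc this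
          exact hf' c (hsub hc1) hc2
      simpa using hxneg
  have hε2 : ε * ε = 1 := by rcases hε1 with rfl | rfl <;> norm_num
  set u : ℝ → ℝ := fun x => Real.sqrt (ε * deriv f x) with hu_def
  have hu_pos : ∀ x ∈ J, 0 < u x := fun x hx => Real.sqrt_pos.mpr (hεpos x hx)
  have hu_sq : ∀ x ∈ J, u x ^ 2 = ε * deriv f x := fun x hx =>
    Real.sq_sqrt (hεpos x hx).le
  have hg_eq : ∀ x ∈ J, deriv f x = ε * u x ^ 2 := by
    intro x hx
    rw [hu_sq x hx, ← mul_assoc, hε2, one_mul]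
  have habs : ∀ x ∈ J, |deriv f x| = ε * deriv f x := by
    intro x hx
    rcases hε1 with rfl | rfl
    · simp only [one_mul] at hεpos ⊢; exact abs_of_pos (hεpos x hx)
    · have : deriv f x < 0 := by have := hεpos x hx; linarith
      rw [abs_of_neg this]; ring
  have hΦu : ∀ x ∈ J, Φ x = f x / u x := by
    intro x hx
    rw [hΦ x hx, habs x hx]
  have hu_deriv : ∀ x ∈ J, HasDerivAt u (ε * deriv (deriv f) x / (2 * u x)) x := by
    intro x hx
    exact (((hgd x hx).hasDerivAt).const_mul ε).sqrt (ne_of_gt (hεpos x hx))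
  set D : ℝ → ℝ := fun x =>
    ε * (u x - f x * deriv (deriv f) x / (2 * u x ^ 3)) with hD_def
  have hΦD : ∀ x ∈ J, HasDerivAt Φ (D x) x := by
    intro x hx
    have h1 : HasDerivAt (fun y => f y / u y)
        ((deriv f x * u x - f x * (ε * deriv (deriv f) x / (2 * u x))) / u x ^ 2) x :=
      ((hfd x hx).hasDerivAt).div (hu_deriv x hx) (ne_of_gt (hu_pos x hx))
    have heq : (fun y => f y / u y) =ᶠ[nhds x] Φ := by
      filter_upwards [hJ.mem_nhds hx] with y hy
      exact (hΦu y hy).symm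
    have h2 : HasDerivAt Φ
        ((deriv f x * u x - f x * (ε * deriv (deriv f) x / (2 * u x))) / u x ^ 2) x :=
      h1.congr_of_eventuallyEq heq.symm
    have hux := (hu_pos x hx).ne'
    convert h2 using 1
    rw [hg_eq x hx, hD_def]
    rcases hε1 with rfl | rfl <;> field_simp [hux] <;> ring_nf <;> field_simp [hux] <;> ring
  have hΦderiv : ∀ x ∈ J, deriv Φ x = D x := fun x hx => (hΦD x hx).deriv
  -- second derivative of Φ
  have hDderiv : ∀ x ∈ J, HasDerivAt D (-(1/2) * schwarzian f x * Φ x) x := by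
    intro x hx
    have hux := (hu_pos x hx).ne'
    have hu3 : HasDerivAt (fun y => 2 * u y ^ 3)
        (2 * (3 * u x ^ 2 * (ε * deriv (deriv f) x / (2 * u x)))) x := by
      simpa [mul_comm] using (((hu_deriv x hx).pow 3).const_mul 2)
    have hnum : HasDerivAt (fun y => f y * deriv (deriv f) y)
        (deriv f x * deriv (deriv f) x + f x * deriv (deriv (deriv f)) x) x :=
      ((hfd x hx).hasDerivAt).mul ((hg'd x hx).hasDerivAt)
    have hfrac : HasDerivAt (fun y => f y * deriv (deriv f) y / (2 * u y ^ 3))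
        (((deriv f x * deriv (deriv f) x + f x * deriv (deriv (deriv f)) x) * (2 * u x ^ 3)
          - f x * deriv (deriv f) x * (2 * (3 * u x ^ 2 * (ε * deriv (deriv f) x / (2 * u x)))))
          / (2 * u x ^ 3) ^ 2) x := by
      exact hnum.div hu3 (by positivity)
    have hD : HasDerivAt D
        (ε * ((ε * deriv (deriv f) x / (2 * u x)) -
          (((deriv f x * deriv (deriv f) x + f x * deriv (deriv (deriv f)) x) * (2 * u x ^ 3)
          - f x * deriv (deriv f) x * (2 * (3 * u x ^ 2 * (ε * deriv (deriv f) x / (2 * u x)))))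
          / (2 * u x ^ 3) ^ 2))) x :=
      (((hu_deriv x hx).sub hfrac).const_mul ε)
    convert hD using 1
    rw [schwarzian, hΦu x hx, hg_eq x hx]
    rcases hε1 with rfl | rfl <;> field_simp [hux] <;> ring_nf <;> field_simp [hux] <;> ring
  have hΦ2 : ∀ x ∈ J, deriv (deriv Φ) x = -(1/2) * schwarzian f x * Φ x := by
    intro x hx
    have heq : deriv Φ =ᶠ[nhds x] D := by
      filter_upwards [hJ.mem_nhds hx] with y hy
      exact hΦderiv y hy
    rw [heq.deriv_eq, (hDderiv x hx).deriv]
  -- sign of f on J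
  have hFmono : StrictMonoOn (fun y => ε * f y) J := by
    apply strictMonoOn_of_deriv_pos hJc
    · exact fun x hx => (((hfd x hx).const_mul ε).continuousAt).continuousWithinAt
    · intro x hx
      rw [hJ.interior_eq] at hx
      rw [(((hfd x hx).hasDerivAt).const_mul ε).deriv]
      exact hεpos x hx
  have hfsign_gt : ∀ x ∈ J, α < x → 0 < ε * f x := by
    intro x hx hax
    have := hFmono hα hx hax
    simpa [hfα] using this
  have hfsign_lt : ∀ x ∈ J, x < α → ε * f x < 0 := by
    intro x hx hax
    have := hFmono hx hα hax
    simpa [hfα] using this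
  -- positivity of ε * D
  have hεΦderiv2 : ∀ x ∈ J, deriv (fun y => ε * D y) x =
      ε * (-(1/2) * schwarzian f x * Φ x) := fun x hx =>
    (((hDderiv x hx).const_mul ε)).deriv
  have hDpos : ∀ x ∈ J, 0 < ε * D x := by
    intro x hx
    have hDα : ε * D α = u α := by
      simp only [hD_def, hfα]
      field_simp
      have hua := (hu_pos α hα).ne'
      rw [sq, hε2, one_mul, zero_mul, sub_zero, div_eq_iff (pow_ne_zero 3 hua)]
      ring
    rcases lt_trichotomy x α with h | h | h
    · -- x < α : ε*D strictly decreasing on [x, α]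
      have hsub : Set.Icc x α ⊆ J := hord.out hx hα
      have hanti : StrictAntiOn (fun y => ε * D y) (Set.Icc x α) := by
        apply strictAntiOn_of_deriv_neg (convex_Icc x α)
        · exact fun y hy => (((hDderiv y (hsub hy)).const_mul ε)).continuousAt.continuousWithinAt
        · intro y hy
          rw [interior_Icc] at hy
          have hyJ : y ∈ J := hsub ⟨hy.1.le, hy.2.le⟩
          rw [hεΦderiv2 y hyJ]
          have hΦs : ε * Φ y = ε * f y / u y := by rw [hΦu y hyJ]; ring
          have h1 : ε * Φ y < 0 := by
            rw [hΦs]; exact div_neg_of_neg_of_pos (hfsign_lt y hyJ hy.2) (hu_pos y hyJ)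
          have hSneg : 0 < -(1/2) * schwarzian f y := by nlinarith [hS y hyJ]
          nlinarith
      have h2 : ε * D α < ε * D x :=
        hanti (Set.left_mem_Icc.mpr h.le) (Set.right_mem_Icc.mpr h.le) h
      rw [hDα] at h2
      exact lt_trans (hu_pos α hα) h2
    · subst h; rw [hDα]; exact hu_pos x hx
    · -- α < x : ε*D strictly increasing on [α, x]
      have hsub : Set.Icc α x ⊆ J := hord.out hα hx
      have hmono : StrictMonoOn (fun y => ε * D y) (Set.Icc α x) := by
        apply strictMonoOn_of_deriv_pos (convex_Icc α x)
        · exact fun y hy => (((hDderiv y (hsub hy)).const_mul ε)).continuousAt.continuousWithinAt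
        · intro y hy
          rw [interior_Icc] at hy
          have hyJ : y ∈ J := hsub ⟨hy.1.le, hy.2.le⟩
          rw [hεΦderiv2 y hyJ]
          have hΦs : ε * Φ y = ε * f y / u y := by rw [hΦu y hyJ]; ring
          have h1 : 0 < ε * Φ y := by
            rw [hΦs]; exact div_pos (hfsign_gt y hyJ hy.1) (hu_pos y hyJ)
          have hSneg : 0 < -(1/2) * schwarzian f y := by nlinarith [hS y hyJ]
          nlinarith
      have h2 : ε * D α < ε * D x :=
        hmono (Set.left_mem_Icc.mpr h.le) (Set.right_mem_Icc.mpr h.le) h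
      rw [hDα] at h2
      exact lt_trans (hu_pos α hα) h2
  constructor
  · rcases hε1 with rfl | rfl
    · left
      apply strictMonoOn_of_deriv_pos hJc
      · exact fun x hx => (hΦD x hx).continuousAt.continuousWithinAt
      · intro x hx
        rw [hJ.interior_eq] at hx
        rw [hΦderiv x hx]
        simpa using hDpos x hx
    · right
      apply strictAntiOn_of_deriv_neg hJc
      · exact fun x hx => (hΦD x hx).continuousAt.continuousWithinAt
      · intro x hx
        rw [hJ.interior_eq] at hx
        rw [hΦderiv x hx]
        have := hDpos x hx
        linarith
  · intro x hx hxα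
    rw [hΦ2 x hx]
    have hΦne : Φ x ≠ 0 := by
      rw [hΦu x hx]
      have hfne : f x ≠ 0 := by
        rcases lt_or_gt_of_ne hxα with h | h
        · have := hfsign_lt x hx h
          intro h0; rw [h0] at this; simp at this
        · have := hfsign_gt x hx h
          intro h0; rw [h0] at this; simp at this
      exact div_ne_zero hfne (hu_pos x hx).ne'
    have hSneg : 0 < -(1/2) * schwarzian f x := by nlinarith [hS x hx]
    have : Φ x * (-(1/2) * schwarzian f x * Φ x) = (-(1/2) * schwarzian f x) * Φ x ^ 2 := by ring
    rw [this]
    exact mul_pos hSneg (by positivity)
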